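/- Let 0 < \lambda < \mu < 1 and \rho = \lambda(1-\mu)/(\mu(1-\lambda)). If Y is geometric with parameter \lambda on {1,2,...} and W(y) = (1-\mu+\mu\rho)^y/(\mu(1-\rho)), then \sum_{y=1}^\infty y \cdot W(y) \cdot \lambda(1-\lambda)^{y-1} = \lambda(1-\mu) / ((\mu-\lambda)\mu^2). -/
import Mathlib


/-- With `0 < l < m < 1`, `r = l(1-m)/(m(1-l))` and `W(y) = (1-m+m r)^y/(m(1-r))`,
`∑_{y≥1} y W(y) l (1-l)^(y-1) = l(1-m)/((m-l) m^2)`. -/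
theorem stmt_5 (l m : ℝ) (hl : 0 < l) (hlm : l < m) (hm : m < 1) :
    (∑' y : ℕ, ((y : ℝ) + 1) *
        ((1 - m + m * (l * (1 - m) / (m * (1 - l)))) ^ (y + 1) /
          (m * (1 - l * (1 - m) / (m * (1 - l))))) *
        (l * (1 - l) ^ y))
      = l * (1 - m) / ((m - l) * m ^ 2) := by
  have hm0 : (0:ℝ) < m := hl.trans hlm
  have hl1 : l < 1 := hlm.trans hm
  have h1l : (0:ℝ) < 1 - l := by linarith
  have h1m : (0:ℝ) < 1 - m := by linarith
  have hml : (0:ℝ) < m - l := by linarith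
  have hx : |1 - m| < 1 := by rw [abs_of_pos h1m]; linarith
  have ha : 1 - m + m * (l * (1 - m) / (m * (1 - l))) = (1 - m) / (1 - l) := by
    field_simp; ring
  have hr : m * (1 - l * (1 - m) / (m * (1 - l))) = (m - l) / (1 - l) := by
    field_simp; ring
  have key : ∀ y : ℕ, ((y : ℝ) + 1) *
        ((1 - m + m * (l * (1 - m) / (m * (1 - l)))) ^ (y + 1) /
          (m * (1 - l * (1 - m) / (m * (1 - l))))) *
        (l * (1 - l) ^ y)
      = (l * (1 - m) / (m - l)) * (((y : ℝ) + 1) * (1 - m) ^ y) := by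
    intro y
    rw [ha, hr, div_pow]
    have h1l' : (1 - l) ^ (y + 1) ≠ 0 := pow_ne_zero _ h1l.ne'
    field_simp
    ring
  rw [tsum_congr key, tsum_mul_left]
  have hs1 : HasSum (fun y : ℕ => (y : ℝ) * (1 - m) ^ y) ((1 - m) / (1 - (1 - m)) ^ 2) :=
    hasSum_coe_mul_geometric_of_norm_lt_one (by simpa using hx)
  have hs2 : HasSum (fun y : ℕ => (1 - m) ^ y) (1 - (1 - m))⁻¹ :=
    hasSum_geometric_of_norm_lt_one (by simpa using hx)
  have hs : HasSum (fun y : ℕ => ((y : ℝ) + 1) * (1 - m) ^ y)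
      ((1 - m) / (1 - (1 - m)) ^ 2 + (1 - (1 - m))⁻¹) := by
    have := hs1.add hs2
    convert this using 2 with y
    ring
  rw [hs.tsum_eq]
  have : 1 - (1 - m) = m := by ring
  rw [this]
  field_simp
  ring
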